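/- Given the map F(x,y,z,w) = (y, z, w, max{0,y,z,w} - x) on ℝ⁴, the function V₂(x,y,z,w) = max{0, x, y, z, w, x+w} + max{0, x, y} + max{0, y, z} + max{0, z, w} - x - y - z - w is a first integral of F, i.e. V₂(F(p)) = V₂(p) for all p ∈ ℝ⁴. -/
import Mathlib
noncomputable def F : ℝ × ℝ × ℝ × ℝ → ℝ × ℝ × ℝ × ℝ :=
  fun p => (p.2.1, p.2.2.1, p.2.2.2, max (max (max 0 p.2.1) p.2.2.1) p.2.2.2 - p.1)
noncomputable def V2 : ℝ × ℝ × ℝ × ℝ → ℝ :=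
  fun p => max (max (max (max (max 0 p.1) p.2.1) p.2.2.1) p.2.2.2) (p.1 + p.2.2.2) +
    max (max 0 p.1) p.2.1 + max (max 0 p.2.1) p.2.2.1 + max (max 0 p.2.2.1) p.2.2.2 -
    p.1 - p.2.1 - p.2.2.1 - p.2.2.2

lemma auxA (M x y : ℝ) : max (max M (M - x)) (y + (M - x)) = M + max (max 0 x) y - x := by
  simp only [max_def]; split_ifs <;> linarith

lemma auxB (M x w : ℝ) (h0 : 0 ≤ M) (hw : w ≤ M) :
    max (max 0 w) (M - x) + x = max (max M x) (x + w) := by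
  simp only [max_def]; split_ifs <;> linarith

lemma auxC (x y z w : ℝ) :
    max (max (max (max 0 x) y) z) w = max (max (max (max 0 y) z) w) x := by
  simp only [max_def]; split_ifs <;> linarith

theorem stmt_6 : ∀ p : ℝ × ℝ × ℝ × ℝ, V2 (F p) = V2 p := by
  rintro ⟨x, y, z, w⟩
  simp only [F, V2]
  set M : ℝ := max (max (max 0 y) z) w with hMdef
  have h0 : (0:ℝ) ≤ M := le_max_of_le_left (le_max_of_le_left (le_max_left 0 y))
  have hw : w ≤ M := le_max_right _ _
  have hA := auxA M x y
  have hB := auxB M x w h0 hw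
  rw [auxC x y z w]
  linarith
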